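/- The multiplicity of the trivial representation of S_n in the permutation representation on nilpotent partial transformations on [n] equals the number of unlabeled rooted trees on n+1 vertices. -/

import Mathlib

/-- Iterate of a partial transformation on `Fin n`. -/
def iterPT {n : ℕ} (f : Fin n → Option (Fin n)) : ℕ → Fin n → Option (Fin n)
  | 0 => fun x => some x
  | k + 1 => fun x => (f x).bind (iterPT f k)

/-- A partial transformation is nilpotent iff its digraph has no directed cycle. -/
def Nilp {n : ℕ} (f : Fin n → Option (Fin n)) : Prop :=
  ∀ (x : Fin n) (k : ℕ), 0 < k → iterPT f k x ≠ some x

/-- Cardinality of the domain of a partial transformation. -/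
def domcard {n : ℕ} (f : Fin n → Option (Fin n)) : ℕ :=
  (Finset.univ.filter fun i => (f i).isSome).card

/-- Conjugation action of the symmetric group on partial transformations. -/
def conjPT {n : ℕ} (w : Equiv.Perm (Fin n)) (f : Fin n → Option (Fin n)) :
    Fin n → Option (Fin n) := fun x => (f (w⁻¹ x)).map w

/-- The subspace of `Sₙ`-invariant vectors in the permutation module `ℂ[X]`
where `X` is the set of nilpotent partial transformations on `[n]` (realized as
invariant functions supported on nilpotent partial transformations). -/
noncomputable def invSub (n : ℕ) : Submodule ℂ ((Fin n → Option (Fin n)) → ℂ) where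
  carrier := {v | (∀ (w : Equiv.Perm (Fin n)) (f : Fin n → Option (Fin n)),
      v (conjPT w f) = v f) ∧ (∀ f, ¬ Nilp f → v f = 0)}
  add_mem' := fun {a} {b} ha hb =>
    ⟨fun w f => by simp [ha.1 w f, hb.1 w f], fun f hf => by simp [ha.2 f hf, hb.2 f hf]⟩
  zero_mem' := ⟨fun _ _ => rfl, fun _ _ => rfl⟩
  smul_mem' := fun c a ha =>
    ⟨fun w f => by simp [ha.1 w f], fun f hf => by simp [ha.2 f hf]⟩

theorem Equiv.Perm.apply_inv_self {α : Type*} (f : Equiv.Perm α) (x : α) : f (f⁻¹ x) = x :=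
  Equiv.apply_symm_apply f x

theorem Equiv.Perm.inv_apply_self {α : Type*} (f : Equiv.Perm α) (x : α) : f⁻¹ (f x) = x :=
  Equiv.symm_apply_apply f x

namespace Stmt7Aux

variable {n : ℕ}

lemma iterPT_conj (w : Equiv.Perm (Fin n)) (f : Fin n → Option (Fin n)) (k : ℕ) (x : Fin n) :
    iterPT (conjPT w f) k x = (iterPT f k (w⁻¹ x)).map w := by
  induction k generalizing x with
  | zero => simp [iterPT]
  | succ k ih =>
    show (conjPT w f x).bind _ = ((f (w⁻¹ x)).bind _).map w
    cases h : f (w⁻¹ x) with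
    | none => simp only [conjPT, h, Option.map_none, Option.bind_none]
    | some a =>
      simp only [conjPT, h, Option.map_some, Option.bind_some]
      rw [ih (w a)]
      simp

lemma nilp_conj (w : Equiv.Perm (Fin n)) {f : Fin n → Option (Fin n)} (hf : Nilp f) :
    Nilp (conjPT w f) := by
  intro x k hk h
  rw [iterPT_conj] at h
  rcases Option.map_eq_some_iff.1 h with ⟨a, ha, haw⟩
  have hax : a = w⁻¹ x := by
    apply w.injective
    rw [haw, Equiv.Perm.apply_inv_self]
  rw [hax] at ha
  exact hf (w⁻¹ x) k hk ha

lemma conj_inv_conj (w : Equiv.Perm (Fin n)) (f : Fin n → Option (Fin n)) :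
    conjPT w⁻¹ (conjPT w f) = f := by
  funext x
  simp only [conjPT, inv_inv, Equiv.Perm.apply_inv_self, Option.map_map]
  cases h : f x <;> simp [h]

lemma conj_of_iff {w : Equiv.Perm (Fin n)} {f h : Fin n → Option (Fin n)}
    (H : ∀ x y, f x = some y ↔ h (w x) = some (w y)) : h = conjPT w f := by
  funext x
  have hx : w (w⁻¹ x) = x := w.apply_inv_self x
  show h x = (f (w⁻¹ x)).map w
  cases hf : f (w⁻¹ x) with
  | none =>
    simp only [Option.map_none]
    cases hh : h x with
    | none => rfl
    | some z =>
      have : f (w⁻¹ x) = some (w⁻¹ z) := (H (w⁻¹ x) (w⁻¹ z)).2 (by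
        rw [hx, Equiv.Perm.apply_inv_self]; exact hh)
      rw [hf] at this; simp at this
  | some y =>
    have := (H (w⁻¹ x) y).1 hf
    rw [hx] at this
    simp [this]

lemma iff_of_conj (w : Equiv.Perm (Fin n)) (f : Fin n → Option (Fin n)) (x y : Fin n) :
    f x = some y ↔ conjPT w f (w x) = some (w y) := by
  show _ ↔ (f (w⁻¹ (w x))).map w = some (w y)
  rw [Equiv.Perm.inv_apply_self]
  constructor
  · intro h; simp [h]
  · intro h
    rcases Option.map_eq_some_iff.1 h with ⟨a, ha, haw⟩
    rwa [w.injective haw] at ha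

lemma none_iff_of_iff {f h : Fin n → Option (Fin n)} {w : Fin n ≃ Fin n}
    (H : ∀ x y, f x = some y ↔ h (w x) = some (w y)) (i : Fin n) :
    f i = none ↔ h (w i) = none := by
  constructor
  · intro hf
    by_contra hh
    obtain ⟨z, hz⟩ := Option.ne_none_iff_exists'.1 hh
    have : f i = some (w.symm z) := (H i (w.symm z)).2 (by rwa [w.apply_symm_apply])
    simp [hf] at this
  · intro hh
    by_contra hf
    obtain ⟨z, hz⟩ := Option.ne_none_iff_exists'.1 hf
    have := (H i z).1 hz
    simp [hh] at this

/-! ### up and down maps -/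

def upFun (f : Fin n → Option (Fin n)) : Fin (n + 1) → Option (Fin (n + 1)) :=
  Fin.lastCases none (fun i => some ((f i).elim (Fin.last n) Fin.castSucc))

@[simp] lemma upFun_last (f : Fin n → Option (Fin n)) : upFun f (Fin.last n) = none :=
  Fin.lastCases_last

@[simp] lemma upFun_castSucc (f : Fin n → Option (Fin n)) (i : Fin n) :
    upFun f i.castSucc = some ((f i).elim (Fin.last n) Fin.castSucc) :=
  Fin.lastCases_castSucc i

def downFun (g : Fin (n + 1) → Option (Fin (n + 1))) : Fin n → Option (Fin n) :=
  fun i => (g i.castSucc).bind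
    (fun y => if h : y = Fin.last n then none else some (y.castPred h))

lemma upFun_eq_some_castSucc_iff (f : Fin n → Option (Fin n)) (i j : Fin n) :
    upFun f i.castSucc = some j.castSucc ↔ f i = some j := by
  rw [upFun_castSucc]
  cases h : f i with
  | none => simp [(Fin.castSucc_lt_last j).ne']
  | some a => simp [Fin.castSucc_inj]

lemma upFun_eq_some_last_iff (f : Fin n → Option (Fin n)) (i : Fin n) :
    upFun f i.castSucc = some (Fin.last n) ↔ f i = none := by
  rw [upFun_castSucc]
  cases h : f i with
  | none => simp
  | some a => simp [(Fin.castSucc_lt_last a).ne]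

lemma up_iter_fwd (f : Fin n → Option (Fin n)) (k : ℕ) (i j : Fin n)
    (h : iterPT f k i = some j) :
    iterPT (upFun f) k i.castSucc = some j.castSucc := by
  induction k generalizing i with
  | zero =>
    simp only [iterPT, Option.some_inj] at h ⊢
    rw [h]
  | succ k ih =>
    show (upFun f i.castSucc).bind _ = _
    replace h : (f i).bind (iterPT f k) = some j := h
    cases hf : f i with
    | none => rw [hf] at h; simp at h
    | some m =>
      rw [hf] at h
      simp only [Option.bind_some] at h
      rw [upFun_castSucc, hf]
      simpa using ih m h

lemma upFun_iter_last (f : Fin n → Option (Fin n)) {k : ℕ} (hk : 0 < k) :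
    iterPT (upFun f) k (Fin.last n) = none := by
  obtain ⟨m, rfl⟩ := Nat.exists_eq_succ_of_ne_zero hk.ne'
  show (upFun f (Fin.last n)).bind _ = none
  simp

lemma up_iter_rev (f : Fin n → Option (Fin n)) (k : ℕ) (i j : Fin n)
    (h : iterPT (upFun f) k i.castSucc = some j.castSucc) :
    iterPT f k i = some j := by
  induction k generalizing i with
  | zero =>
    simp only [iterPT, Option.some_inj] at h ⊢
    exact Fin.castSucc_injective _ h
  | succ k ih =>
    replace h : (upFun f i.castSucc).bind (iterPT (upFun f) k) = some j.castSucc := h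
    rw [upFun_castSucc, Option.bind_some] at h
    show (f i).bind (iterPT f k) = some j
    cases hf : f i with
    | none =>
      rw [hf] at h
      simp only [Option.elim_none] at h
      cases k with
      | zero =>
        simp only [iterPT, Option.some_inj] at h
        exact absurd h.symm (Fin.castSucc_lt_last j).ne
      | succ k =>
        rw [upFun_iter_last f (Nat.succ_pos k)] at h
        exact absurd h (by simp)
    | some m =>
      rw [hf] at h
      simp only [Option.elim_some] at h
      rw [Option.bind_some]
      exact ih m h

lemma nilp_up {f : Fin n → Option (Fin n)} (hf : Nilp f) : Nilp (upFun f) := by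
  intro x k hk h
  induction x using Fin.lastCases with
  | last => rw [upFun_iter_last f hk] at h; exact absurd h (by simp)
  | cast i => exact hf i k hk (up_iter_rev f k i i h)

lemma isSome_upFun (f : Fin n → Option (Fin n)) (x : Fin (n + 1)) :
    (upFun f x).isSome ↔ x ≠ Fin.last n := by
  induction x using Fin.lastCases with
  | last => simp
  | cast i => simp [(Fin.castSucc_lt_last i).ne]

lemma domcard_up (f : Fin n → Option (Fin n)) : domcard (upFun f) = n := by
  unfold domcard
  have : (Finset.univ.filter fun i => (upFun f i).isSome) =
      Finset.univ.erase (Fin.last n) := by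
    ext x
    simp [isSome_upFun]
  rw [this, Finset.card_erase_of_mem (Finset.mem_univ _), Finset.card_univ, Fintype.card_fin]
  omega

lemma up_down {g : Fin (n + 1) → Option (Fin (n + 1))}
    (hg : ∀ x, (g x).isSome ↔ x ≠ Fin.last n) : upFun (downFun g) = g := by
  funext x
  induction x using Fin.lastCases with
  | last =>
    rw [upFun_last]
    have : ¬ (g (Fin.last n)).isSome := by simp [hg]
    exact (Option.not_isSome_iff_eq_none.1 this).symm
  | cast i =>
    rw [upFun_castSucc]
    obtain ⟨y, hy⟩ := Option.isSome_iff_exists.1 ((hg i.castSucc).2 (Fin.castSucc_lt_last i).ne)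
    rw [hy]
    have hd : downFun g i = (some y).bind
        (fun y => if h : y = Fin.last n then none else some (y.castPred h)) := by
      unfold downFun; rw [hy]
    by_cases hyl : y = Fin.last n
    · rw [hd]; simp [hyl]
    · rw [hd]; simp [hyl, Fin.castSucc_castPred]

lemma nilp_down {g : Fin (n + 1) → Option (Fin (n + 1))} (hgn : Nilp g)
    (hs : ∀ x, (g x).isSome ↔ x ≠ Fin.last n) : Nilp (downFun g) := by
  intro i k hk h
  have h2 := up_iter_fwd (downFun g) k i i h
  rw [up_down hs] at h2
  exact hgn i.castSucc k hk h2

/-! ### permutations -/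

def extendPerm (w : Equiv.Perm (Fin n)) : Equiv.Perm (Fin (n + 1)) where
  toFun := Fin.lastCases (Fin.last n) (fun i => (w i).castSucc)
  invFun := Fin.lastCases (Fin.last n) (fun i => (w⁻¹ i).castSucc)
  left_inv x := by
    induction x using Fin.lastCases with
    | last => simp
    | cast i => simp
  right_inv x := by
    induction x using Fin.lastCases with
    | last => simp
    | cast i => simp

@[simp] lemma extendPerm_last (w : Equiv.Perm (Fin n)) :
    extendPerm w (Fin.last n) = Fin.last n := by
  show (Fin.lastCases (Fin.last n) (fun i => (w i).castSucc) (Fin.last n) : Fin (n + 1)) = _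
  rw [Fin.lastCases_last]

@[simp] lemma extendPerm_castSucc (w : Equiv.Perm (Fin n)) (i : Fin n) :
    extendPerm w i.castSucc = (w i).castSucc := by
  show (Fin.lastCases (Fin.last n) (fun i => (w i).castSucc) i.castSucc : Fin (n + 1)) = _
  rw [Fin.lastCases_castSucc]

def restrictPerm (e : Fin (n + 1) ≃ Fin (n + 1)) (he : e (Fin.last n) = Fin.last n) :
    Equiv.Perm (Fin n) where
  toFun i := (e i.castSucc).castPred (by
    intro h
    exact (Fin.castSucc_lt_last i).ne (e.injective (h.trans he.symm)))
  invFun i := (e.symm i.castSucc).castPred (by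
    intro h
    apply (Fin.castSucc_lt_last i).ne
    have h2 := congrArg e h
    rw [Equiv.apply_symm_apply, he] at h2
    exact h2)
  left_inv i := by
    apply Fin.castSucc_injective
    simp [Fin.castSucc_castPred]
  right_inv i := by
    apply Fin.castSucc_injective
    simp [Fin.castSucc_castPred]

@[simp] lemma restrictPerm_castSucc (e : Fin (n + 1) ≃ Fin (n + 1))
    (he : e (Fin.last n) = Fin.last n) (i : Fin n) :
    (restrictPerm e he i).castSucc = e i.castSucc :=
  Fin.castSucc_castPred (e i.castSucc)
    (fun h => (Fin.castSucc_lt_last i).ne (e.injective (h.trans he.symm)))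

lemma apply_last_eq_last {e : Fin (n + 1) ≃ Fin (n + 1)}
    {g h : Fin (n + 1) → Option (Fin (n + 1))}
    (hgs : ∀ x, (g x).isSome ↔ x ≠ Fin.last n)
    (hhs : ∀ x, (h x).isSome ↔ x ≠ Fin.last n)
    (H : ∀ x y, g x = some y ↔ h (e x) = some (e y)) : e (Fin.last n) = Fin.last n := by
  by_contra hne
  obtain ⟨z, hz⟩ := Option.isSome_iff_exists.1 ((hhs _).2 hne)
  have hgl : g (Fin.last n) = some (e.symm z) :=
    (H _ _).2 (by rwa [e.apply_symm_apply])
  have : (g (Fin.last n)).isSome := by simp [hgl]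
  exact (hgs _).1 this rfl

/-! ### relations and quotients -/

def S (n : ℕ) := {f : Fin n → Option (Fin n) // Nilp f}

def T (n : ℕ) := {g : Fin (n + 1) → Option (Fin (n + 1)) // Nilp g ∧ domcard g = n}

def Rel1 (n : ℕ) (f h : S n) : Prop :=
  ∃ e : Fin n ≃ Fin n, ∀ x y, f.1 x = some y ↔ h.1 (e x) = some (e y)

def Rel2 (n : ℕ) (g h : T n) : Prop :=
  ∃ e : Fin (n + 1) ≃ Fin (n + 1), ∀ x y, g.1 x = some y ↔ h.1 (e x) = some (e y)

lemma relIso_equiv {m : ℕ} {P : (Fin m → Option (Fin m)) → Prop} :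
    Equivalence (fun f h : {f : Fin m → Option (Fin m) // P f} =>
      ∃ e : Fin m ≃ Fin m, ∀ x y, f.1 x = some y ↔ h.1 (e x) = some (e y)) := by
  constructor
  · intro f; exact ⟨Equiv.refl _, by simp⟩
  · rintro f g ⟨e, he⟩
    refine ⟨e.symm, fun x y => ?_⟩
    have := he (e.symm x) (e.symm y)
    rw [e.apply_symm_apply, e.apply_symm_apply] at this
    exact this.symm
  · rintro f g h ⟨e1, he1⟩ ⟨e2, he2⟩
    exact ⟨e1.trans e2, fun x y => (he1 x y).trans (he2 (e1 x) (e1 y))⟩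

lemma rel2_equiv : Equivalence (Rel2 n) := relIso_equiv

def Fmap (f : S n) : T n := ⟨upFun f.1, nilp_up f.2, domcard_up f.1⟩

@[simp] lemma Fmap_coe (f : S n) : (Fmap f).1 = upFun f.1 := rfl

lemma rel2_of_rel1 {f f' : S n} (h : Rel1 n f f') : Rel2 n (Fmap f) (Fmap f') := by
  obtain ⟨w, hw⟩ := h
  refine ⟨extendPerm w, fun x y => ?_⟩
  induction x using Fin.lastCases with
  | last =>
    show upFun f.1 (Fin.last n) = some y ↔ upFun f'.1 (extendPerm w (Fin.last n)) = _
    rw [extendPerm_last, upFun_last, upFun_last]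
    simp
  | cast i =>
    show upFun f.1 i.castSucc = some y ↔ upFun f'.1 (extendPerm w i.castSucc) = _
    rw [extendPerm_castSucc]
    induction y using Fin.lastCases with
    | last =>
      rw [extendPerm_last, upFun_eq_some_last_iff, upFun_eq_some_last_iff]
      exact none_iff_of_iff hw i
    | cast j =>
      rw [extendPerm_castSucc, upFun_eq_some_castSucc_iff, upFun_eq_some_castSucc_iff]
      exact hw i j

lemma rel1_of_rel2_F {a b : S n} (h : Rel2 n (Fmap a) (Fmap b)) : Rel1 n a b := by
  obtain ⟨e, he⟩ := h
  have hel : e (Fin.last n) = Fin.last n :=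
    apply_last_eq_last (isSome_upFun a.1) (isSome_upFun b.1) he
  refine ⟨restrictPerm e hel, fun x y => ?_⟩
  have := he x.castSucc y.castSucc
  rw [Fmap_coe, Fmap_coe, ← restrictPerm_castSucc e hel x, ← restrictPerm_castSucc e hel y,
    upFun_eq_some_castSucc_iff, upFun_eq_some_castSucc_iff] at this
  exact this

noncomputable def quotEquiv (n : ℕ) : Quot (Rel1 n) ≃ Quot (Rel2 n) := by
  apply Equiv.ofBijective
    (Quot.lift (fun f => Quot.mk (Rel2 n) (Fmap f))
      (fun a b h => Quot.sound (rel2_of_rel1 h)))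
  constructor
  · intro qa qb
    induction qa using Quot.ind with | mk a =>
    induction qb using Quot.ind with | mk b =>
    intro h
    have h2 : Rel2 n (Fmap a) (Fmap b) := (rel2_equiv.eqvGen_iff).1 (Quot.eq.1 h)
    exact Quot.sound (rel1_of_rel2_F h2)
  · intro q
    induction q using Quot.ind with | mk g =>
    obtain ⟨g, hgn, hgd⟩ := g
    classical
    -- the unique undefined point of g
    have hcard : (Finset.univ.filter fun x => ¬ (g x).isSome).card = 1 := by
      rw [Finset.filter_not, Finset.card_sdiff_of_subset (Finset.filter_subset _ _), Finset.card_univ,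
        Fintype.card_fin]
      rw [show (Finset.univ.filter fun i => (g i).isSome).card = n from hgd]
      omega
    obtain ⟨r, hr⟩ := Finset.card_eq_one.1 hcard
    have hroot : ∀ x, g x = none ↔ x = r := by
      intro x
      have hmem : x ∈ (Finset.univ.filter fun x => ¬ (g x).isSome) ↔ x = r := by
        rw [hr, Finset.mem_singleton]
      rw [← hmem, Finset.mem_filter, Option.not_isSome_iff_eq_none]
      simp
    set w : Equiv.Perm (Fin (n + 1)) := Equiv.swap r (Fin.last n) with hw
    set g' := conjPT w g with hg'
    have hg's : ∀ x, (g' x).isSome ↔ x ≠ Fin.last n := by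
      intro x
      show ((g (w⁻¹ x)).map w).isSome ↔ _
      rw [Option.isSome_map, ← Option.ne_none_iff_isSome, Ne, hroot]
      rw [hw, Equiv.swap_inv, Equiv.swap_apply_eq_iff, Equiv.swap_apply_left]

    have hg'n : Nilp g' := nilp_conj w hgn
    refine ⟨Quot.mk _ ⟨downFun g', nilp_down hg'n hg's⟩, ?_⟩
    apply Quot.sound
    refine ⟨(w⁻¹ : Equiv.Perm (Fin (n + 1))), fun x y => ?_⟩
    show upFun (downFun g') x = some y ↔ g (w⁻¹ x) = some (w⁻¹ y)
    rw [up_down hg's]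
    have := iff_of_conj w g (w⁻¹ x) (w⁻¹ y)
    rw [Equiv.Perm.apply_inv_self, Equiv.Perm.apply_inv_self] at this
    exact this.symm

end Stmt7Aux

open Stmt7Aux in
open scoped Classical in
noncomputable def invEquiv (n : ℕ) : (invSub n) ≃ₗ[ℂ] (Quot (Rel1 n) → ℂ) where
  toFun v := Quot.lift (fun f => v.1 f.1) (by
    rintro a b ⟨e, he⟩
    have hb : b.1 = conjPT e a.1 := conj_of_iff he
    show v.1 a.1 = v.1 b.1
    rw [hb]
    exact (v.2.1 e a.1).symm)
  map_add' u v := by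
    funext q
    induction q using Quot.ind with | mk a => rfl
  map_smul' c v := by
    funext q
    induction q using Quot.ind with | mk a => rfl
  invFun u := ⟨fun g => if h : Nilp g then u (Quot.mk _ ⟨g, h⟩) else 0, by
    refine ⟨fun w f => ?_, fun f hf => by simp [hf]⟩
    by_cases h : Nilp f
    · have h2 : Nilp (conjPT w f) := nilp_conj w h
      show (if h : Nilp (conjPT w f) then u (Quot.mk _ ⟨conjPT w f, h⟩) else 0) =
        (if h : Nilp f then u (Quot.mk _ ⟨f, h⟩) else 0)
      rw [dif_pos h, dif_pos h2]
      have : Quot.mk (Rel1 n) ⟨f, h⟩ = Quot.mk (Rel1 n) ⟨conjPT w f, h2⟩ :=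
        Quot.sound ⟨w, fun x y => iff_of_conj w f x y⟩
      rw [this]
    · have h2 : ¬ Nilp (conjPT w f) := fun hc => h (by
        rw [← conj_inv_conj w f]; exact nilp_conj w⁻¹ hc)
      show (if h : Nilp (conjPT w f) then u (Quot.mk _ ⟨conjPT w f, h⟩) else 0) =
        (if h : Nilp f then u (Quot.mk _ ⟨f, h⟩) else 0)
      rw [dif_neg h, dif_neg h2]⟩
  left_inv v := by
    apply Subtype.ext
    funext g
    show (if h : Nilp g then _ else 0) = v.1 g
    by_cases h : Nilp g
    · rw [dif_pos h]
    · rw [dif_neg h]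
      exact (v.2.2 g h).symm
  right_inv u := by
    funext q
    induction q using Quot.ind with | mk a =>
    obtain ⟨g, hg⟩ := a
    show (if h : Nilp g then u (Quot.mk _ ⟨g, h⟩) else 0) = u (Quot.mk _ ⟨g, hg⟩)
    rw [dif_pos hg]

/-- the multiplicity of the trivial representation of `Sₙ` in the
permutation representation on nilpotent partial transformations on `[n]` (i.e.
the dimension of the invariant subspace) equals the number of unlabeled rooted
trees on `n+1` vertices (isomorphism classes of nilpotent partial
transformations on `[n+1]` with domain of size `n`, i.e. rooted trees). -/
theorem stmt7 (n : ℕ) :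
    Module.finrank ℂ (invSub n) =
      Nat.card (Quot (fun g h : {g : Fin (n+1) → Option (Fin (n+1)) //
          Nilp g ∧ domcard g = n} =>
        ∃ e : Fin (n+1) ≃ Fin (n+1),
          ∀ x y : Fin (n+1), g.1 x = some y ↔ h.1 (e x) = some (e y))) := by
  classical
  rw [(invEquiv n).finrank_eq]
  haveI : Finite (Stmt7Aux.S n) := by unfold Stmt7Aux.S; infer_instance
  haveI : Finite (Quot (Stmt7Aux.Rel1 n)) := Quot.finite _
  haveI : Fintype (Quot (Stmt7Aux.Rel1 n)) := Fintype.ofFinite _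
  rw [Module.finrank_pi ℂ, ← Nat.card_eq_fintype_card]
  exact Nat.card_congr (Stmt7Aux.quotEquiv n)
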